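/- Let u, v ∈ ℂⁿ be nonzero vectors and let l ∈ {1, …, n−1} satisfy λ_l ≥ ρ(u) ≥ λ_{l+1}. If |xⱼᴴv| ≤ |xⱼᴴu| for every j ∈ {1, …, l} and |xⱼᴴv| ≥ |xⱼᴴu| for every j ∈ {l+1, …, n}, then ρ(u) ≥ ρ(v). -/

import Mathlib

/-- The Rayleigh quotient `ρ(v) = (vᴴAv)/(vᴴv)` of the Hermitian matrix `A`. -/
noncomputable def rayleigh {n : ℕ} (A : Matrix (Fin n) (Fin n) ℂ)
    (v : EuclideanSpace ℂ (Fin n)) : ℝ :=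
  ((inner ℂ v (Matrix.toEuclideanLin A v) : ℂ)).re / ‖v‖ ^ 2

/-- The `i`-th largest Ritz value (1-indexed, `i ∈ {1, …, dim S}`) of the Hermitian
matrix `A` in the subspace `S`, characterized via the Courant–Fischer max-min
principle applied inside `S` (equivalently, the `i`-th largest eigenvalue of
`SᴴAS` for any orthonormal basis matrix `S`). -/
noncomputable def ritzValue {n : ℕ} (A : Matrix (Fin n) (Fin n) ℂ)
    (S : Submodule ℂ (EuclideanSpace ℂ (Fin n))) (i : ℕ) : ℝ :=
  sSup {r : ℝ | ∃ T : Submodule ℂ (EuclideanSpace ℂ (Fin n)), T ≤ S ∧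
    Module.finrank ℂ T = i ∧ ∀ v ∈ T, v ≠ 0 → r ≤ rayleigh A v}

/-- `f(A) = ∑ j, f(λ_j) x_j x_jᴴ` as a linear operator, for eigenvalues `lam`
and orthonormal eigenvectors `x` of `A`. -/
noncomputable def matFun {n : ℕ} (lam : Fin n → ℝ)
    (x : Fin n → EuclideanSpace ℂ (Fin n)) (f : ℝ → ℝ) :
    EuclideanSpace ℂ (Fin n) →ₗ[ℂ] EuclideanSpace ℂ (Fin n) :=
  ∑ j : Fin n, (f (lam j) : ℂ) • ((innerSL ℂ (x j)).toLinearMap.smulRight (x j))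

/-- `y` is a Ritz vector of `A` in `S` associated with the Ritz value `η`:
`y ∈ S`, `y ≠ 0`, `ρ(y) = η` and `Ay − ηy ⊥ S`. -/
def IsRitzVector {n : ℕ} (A : Matrix (Fin n) (Fin n) ℂ)
    (S : Submodule ℂ (EuclideanSpace ℂ (Fin n))) (η : ℝ)
    (y : EuclideanSpace ℂ (Fin n)) : Prop :=
  y ∈ S ∧ y ≠ 0 ∧ rayleigh A y = η ∧
    ∀ v ∈ S, (inner ℂ v (Matrix.toEuclideanLin A y - (η : ℂ) • y) : ℂ) = 0


lemma expandAux {n : ℕ} (A : Matrix (Fin n) (Fin n) ℂ)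
    (lam : Fin n → ℝ) (x : Fin n → EuclideanSpace ℂ (Fin n)) (hx : Orthonormal ℂ x)
    (heig : ∀ j, Matrix.toEuclideanLin A (x j) = (lam j : ℂ) • x j)
    (hn : 0 < n) (w : EuclideanSpace ℂ (Fin n)) :
    ((inner ℂ w (Matrix.toEuclideanLin A w) : ℂ)).re
      = ∑ j, lam j * ‖(inner ℂ (x j) w : ℂ)‖ ^ 2 ∧
    ‖w‖ ^ 2 = ∑ j, ‖(inner ℂ (x j) w : ℂ)‖ ^ 2 := by
  haveI : Nonempty (Fin n) := ⟨⟨0, hn⟩⟩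
  have hcard : Fintype.card (Fin n) = Module.finrank ℂ (EuclideanSpace ℂ (Fin n)) := by simp
  have hsp : ⊤ ≤ Submodule.span ℂ (Set.range x) := by
    rw [← (basisOfOrthonormalOfCardEqFinrank hx hcard).span_eq,
      coe_basisOfOrthonormalOfCardEqFinrank]
  let b : OrthonormalBasis (Fin n) ℂ (EuclideanSpace ℂ (Fin n)) := .mk hx hsp
  have hb : ∀ j, b j = x j := fun j => by simp [b]
  have key : ∀ j, (inner ℂ w (x j) : ℂ) * (inner ℂ (x j) w : ℂ)
      = ((‖(inner ℂ (x j) w : ℂ)‖ ^ 2 : ℝ) : ℂ) := by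
    intro j
    rw [← inner_conj_symm, mul_comm, RCLike.mul_conj]
    norm_cast
  constructor
  · have hw : w = ∑ j, (inner ℂ (x j) w : ℂ) • x j := by
      conv_lhs => rw [← b.sum_repr' w]
      simp [hb]
    have hAw : Matrix.toEuclideanLin A w
        = ∑ j, ((lam j : ℂ) * (inner ℂ (x j) w : ℂ)) • x j := by
      conv_lhs => rw [hw]
      rw [map_sum]
      refine Finset.sum_congr rfl fun j _ => ?_
      rw [LinearMap.map_smul, heig, smul_smul, mul_comm]
    rw [hAw, inner_sum, Complex.re_sum]
    refine Finset.sum_congr rfl fun j _ => ?_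
    rw [inner_smul_right]
    have e : ((lam j : ℂ) * inner ℂ (x j) w) * inner ℂ w (x j)
        = (lam j : ℂ) * ((inner ℂ w (x j) : ℂ) * inner ℂ (x j) w) := by ring
    rw [e, key j]
    norm_cast
  · have h := b.sum_inner_mul_inner w w
    have h2 : ((inner ℂ w w : ℂ)).re = ∑ j, ‖(inner ℂ (x j) w : ℂ)‖ ^ 2 := by
      rw [← h, Complex.re_sum]
      refine Finset.sum_congr rfl fun j _ => ?_
      rw [hb, key j]
      norm_cast
    rw [← h2]
    exact (inner_self_eq_norm_sq (𝕜 := ℂ) w).symm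

theorem stmt3' {n : ℕ}
    (A : Matrix (Fin n) (Fin n) ℂ) (hA : A.IsHermitian)
    (lam : Fin n → ℝ) (hlam : Antitone lam)
    (x : Fin n → EuclideanSpace ℂ (Fin n)) (hx : Orthonormal ℂ x)
    (heig : ∀ j, Matrix.toEuclideanLin A (x j) = (lam j : ℂ) • x j)
    (u v : EuclideanSpace ℂ (Fin n)) (hu : u ≠ 0) (hv : v ≠ 0)
    (l : ℕ) (hl1 : 1 ≤ l) (hln : l < n)
    (hup : (((inner ℂ u (Matrix.toEuclideanLin A u) : ℂ)).re / ‖u‖ ^ 2) ≤ lam ⟨l - 1, Nat.lt_of_le_of_lt (Nat.sub_le l 1) hln⟩)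
    (hlo : lam ⟨l, hln⟩ ≤ (((inner ℂ u (Matrix.toEuclideanLin A u) : ℂ)).re / ‖u‖ ^ 2))
    (h1 : ∀ j : Fin n, (j : ℕ) < l → ‖(inner ℂ (x j) v : ℂ)‖ ≤ ‖(inner ℂ (x j) u : ℂ)‖)
    (h2 : ∀ j : Fin n, l ≤ (j : ℕ) → ‖(inner ℂ (x j) u : ℂ)‖ ≤ ‖(inner ℂ (x j) v : ℂ)‖) :
    (((inner ℂ v (Matrix.toEuclideanLin A v) : ℂ)).re / ‖v‖ ^ 2)
      ≤ (((inner ℂ u (Matrix.toEuclideanLin A u) : ℂ)).re / ‖u‖ ^ 2) := by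
  have hn : 0 < n := by omega
  obtain ⟨hu1, hu2⟩ := expandAux A lam x hx heig hn u
  obtain ⟨hv1, hv2⟩ := expandAux A lam x hx heig hn v
  set ρ : ℝ := (((inner ℂ u (Matrix.toEuclideanLin A u) : ℂ)).re / ‖u‖ ^ 2) with hρ
  have hnu : (0:ℝ) < ‖u‖ ^ 2 := by have := norm_pos_iff.mpr hu; positivity
  have hnv : (0:ℝ) < ‖v‖ ^ 2 := by have := norm_pos_iff.mpr hv; positivity
  have hNu : ((inner ℂ u (Matrix.toEuclideanLin A u) : ℂ)).re = ρ * ‖u‖ ^ 2 := by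
    rw [hρ, div_mul_cancel₀]; exact hnu.ne'
  have hsumu : ∑ j, (lam j - ρ) * ‖(inner ℂ (x j) u : ℂ)‖ ^ 2 = 0 := by
    have : ∑ j, (lam j - ρ) * ‖(inner ℂ (x j) u : ℂ)‖ ^ 2
        = (∑ j, lam j * ‖(inner ℂ (x j) u : ℂ)‖ ^ 2)
          - ρ * ∑ j, ‖(inner ℂ (x j) u : ℂ)‖ ^ 2 := by
      rw [Finset.mul_sum, ← Finset.sum_sub_distrib]
      exact Finset.sum_congr rfl fun j _ => by ring
    rw [this, ← hu1, ← hu2, hNu, sub_self]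
  have hterm : ∀ j : Fin n, (lam j - ρ) * ‖(inner ℂ (x j) v : ℂ)‖ ^ 2
      ≤ (lam j - ρ) * ‖(inner ℂ (x j) u : ℂ)‖ ^ 2 := by
    intro j
    by_cases hj : (j : ℕ) < l
    · have hpos : 0 ≤ lam j - ρ := by
        have : lam ⟨l - 1, by omega⟩ ≤ lam j := hlam (by simp [Fin.le_def]; omega)
        linarith
      have := h1 j hj
      have hsq : ‖(inner ℂ (x j) v : ℂ)‖ ^ 2 ≤ ‖(inner ℂ (x j) u : ℂ)‖ ^ 2 :=
        pow_le_pow_left₀ (norm_nonneg _) this 2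
      exact mul_le_mul_of_nonneg_left hsq hpos
    · have hneg : lam j - ρ ≤ 0 := by
        have : lam j ≤ lam ⟨l, hln⟩ := hlam (by simp [Fin.le_def]; omega)
        linarith
      have := h2 j (by omega)
      have hsq : ‖(inner ℂ (x j) u : ℂ)‖ ^ 2 ≤ ‖(inner ℂ (x j) v : ℂ)‖ ^ 2 :=
        pow_le_pow_left₀ (norm_nonneg _) this 2
      exact mul_le_mul_of_nonpos_left hsq hneg
  have hsumv : ∑ j, (lam j - ρ) * ‖(inner ℂ (x j) v : ℂ)‖ ^ 2 ≤ 0 := by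
    calc ∑ j, (lam j - ρ) * ‖(inner ℂ (x j) v : ℂ)‖ ^ 2
        ≤ ∑ j, (lam j - ρ) * ‖(inner ℂ (x j) u : ℂ)‖ ^ 2 :=
          Finset.sum_le_sum fun j _ => hterm j
      _ = 0 := hsumu
  rw [div_le_iff₀ hnv, hv1]
  have expand : ∑ j, (lam j - ρ) * ‖(inner ℂ (x j) v : ℂ)‖ ^ 2
      = (∑ j, lam j * ‖(inner ℂ (x j) v : ℂ)‖ ^ 2)
        - ρ * ∑ j, ‖(inner ℂ (x j) v : ℂ)‖ ^ 2 := by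
    rw [Finset.mul_sum, ← Finset.sum_sub_distrib]
    exact Finset.sum_congr rfl fun j _ => by ring
  rw [expand] at hsumv
  rw [hv2]
  linarith

/-- If `λ_l ≥ ρ(u) ≥ λ_{l+1}` and the eigenvector components of `v`
are dominated by those of `u` for `j ≤ l` while dominating for `j > l`, then
`ρ(u) ≥ ρ(v)`.  (0-indexed: `lam ⟨j⟩` is `λ_{j+1}`.) -/
theorem stmt3 {n : ℕ}
    (A : Matrix (Fin n) (Fin n) ℂ) (hA : A.IsHermitian)
    (lam : Fin n → ℝ) (hlam : Antitone lam)
    (x : Fin n → EuclideanSpace ℂ (Fin n)) (hx : Orthonormal ℂ x)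
    (heig : ∀ j, Matrix.toEuclideanLin A (x j) = (lam j : ℂ) • x j)
    (u v : EuclideanSpace ℂ (Fin n)) (hu : u ≠ 0) (hv : v ≠ 0)
    (l : ℕ) (hl1 : 1 ≤ l) (hln : l < n)
    (hup : rayleigh A u ≤ lam ⟨l - 1, by omega⟩)
    (hlo : lam ⟨l, hln⟩ ≤ rayleigh A u)
    (h1 : ∀ j : Fin n, (j : ℕ) < l → ‖(inner ℂ (x j) v : ℂ)‖ ≤ ‖(inner ℂ (x j) u : ℂ)‖)
    (h2 : ∀ j : Fin n, l ≤ (j : ℕ) → ‖(inner ℂ (x j) u : ℂ)‖ ≤ ‖(inner ℂ (x j) v : ℂ)‖) :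
    rayleigh A v ≤ rayleigh A u := by
  unfold rayleigh at hup hlo ⊢
  exact stmt3' A hA lam hlam x hx heig u v hu hv l hl1 hln hup hlo h1 h2
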